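/- In the unweighted case ν ≡ 1 on [0,1], the sharp constant max_{0≤x≤1} (2/ν(x)) (∫₀ˣ ν)(∫ₓ¹ ν)/(∫₀¹ ν) equals 1/2, attained at x = 1/2; hence every C¹ function f on [0,1] with ∫₀¹ f = 0 satisfies ∫₀¹ |f| ≤ (1/2) ∫₀¹ |f'|. -/

import Mathlib

open MeasureTheory Set intervalIntegral

theorem poincare_aux (f f' : ℝ → ℝ)
    (hf : ∀ x ∈ Icc (0:ℝ) 1, HasDerivAt f (f' x) x)
    (hf' : ContinuousOn f' (Icc 0 1))
    (hmean : ∫ x in (0:ℝ)..1, f x = 0) :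
    ∫ x in (0:ℝ)..1, |f x| ≤ (1 / 2) * ∫ x in (0:ℝ)..1, |f' x| := by
  have h01 : (0:ℝ) ≤ 1 := by norm_num
  have huIcc : uIcc (0:ℝ) 1 = Icc 0 1 := uIcc_of_le h01
  set φ : ℝ → ℝ := fun x => |f' (projIcc 0 1 h01 x)| with hφdef
  have hφc : Continuous φ :=
    continuous_abs.comp (hf'.comp_continuous
      (continuous_subtype_val.comp continuous_projIcc) fun x => (projIcc 0 1 h01 x).2)
  have hφeq : ∀ x ∈ Icc (0:ℝ) 1, φ x = |f' x| := by
    intro x hx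
    simp [hφdef, projIcc_of_mem h01 hx]
  have hφ0 : ∀ x, 0 ≤ φ x := fun x => abs_nonneg _
  set G : ℝ → ℝ := fun x => ∫ t in (0:ℝ)..x, φ t with hGdef
  have hGd : ∀ x, HasDerivAt G (φ x) x := fun x =>
    (hφc.integral_hasStrictDerivAt 0 x).hasDerivAt
  have hGc : Continuous G := continuous_iff_continuousAt.2 fun x => (hGd x).continuousAt
  have hGsub : ∀ y x : ℝ, G x - G y = ∫ t in y..x, φ t := fun y x =>
    integral_interval_sub_left (hφc.intervalIntegrable 0 x) (hφc.intervalIntegrable 0 y)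
  have hGmono : ∀ {y x : ℝ}, y ≤ x → G y ≤ G x := by
    intro y x hyx
    have : 0 ≤ G x - G y := by
      rw [hGsub]
      exact integral_nonneg hyx fun t _ => hφ0 t
    linarith
  have hG0 : G 0 = 0 := integral_same
  set H : ℝ → ℝ := fun x => ∫ t in (0:ℝ)..x, G t with hHdef
  have hHd : ∀ x, HasDerivAt H (G x) x := fun x =>
    (hGc.integral_hasStrictDerivAt 0 x).hasDerivAt
  have hHc : Continuous H := continuous_iff_continuousAt.2 fun x => (hHd x).continuousAt
  have hH0 : H 0 = 0 := integral_same
  have hHsub : ∀ y x : ℝ, H x - H y = ∫ t in y..x, G t := fun y x =>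
    integral_interval_sub_left (hGc.intervalIntegrable 0 x) (hGc.intervalIntegrable 0 y)
  have hfc : ContinuousOn f (Icc 0 1) := fun t ht => (hf t ht).continuousAt.continuousWithinAt
  have hfint : IntervalIntegrable f volume 0 1 := by
    apply ContinuousOn.intervalIntegrable; rwa [huIcc]
  -- one-sided Lipschitz-type estimate
  have key1 : ∀ y ∈ Icc (0:ℝ) 1, ∀ x ∈ Icc (0:ℝ) 1, y ≤ x → |f x - f y| ≤ G x - G y := by
    intro y hy x hx hyx
    have hsub : uIcc y x ⊆ Icc 0 1 := by
      rw [uIcc_of_le hyx]; exact Icc_subset_Icc hy.1 hx.2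
    have hFTC : ∫ t in y..x, f' t = f x - f y :=
      integral_eq_sub_of_hasDerivAt (fun t ht => hf t (hsub ht))
        ((hf'.mono hsub).intervalIntegrable)
    rw [← hFTC]
    calc |∫ t in y..x, f' t| ≤ ∫ t in y..x, |f' t| := abs_integral_le_integral_abs hyx
      _ = ∫ t in y..x, φ t := integral_congr fun t ht => (hφeq t (hsub ht)).symm
      _ = G x - G y := (hGsub y x).symm
  have key1' : ∀ y ∈ Icc (0:ℝ) 1, ∀ x ∈ Icc (0:ℝ) 1, |f x - f y| ≤ |G x - G y| := by
    intro y hy x hx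
    rcases le_total y x with h | h
    · exact (key1 y hy x hx h).trans (le_abs_self _)
    · rw [abs_sub_comm (f x), abs_sub_comm (G x)]
      exact (key1 x hx y hy h).trans (le_abs_self _)
  -- pointwise bound
  have key2 : ∀ x ∈ Icc (0:ℝ) 1, |f x| ≤ (2*x - 1) * G x + (H 1 - 2 * H x) := by
    intro x hx
    have hrepr : f x = ∫ y in (0:ℝ)..1, (f x - f y) := by
      rw [integral_sub (intervalIntegrable_const) hfint, hmean, intervalIntegral.integral_const]
      simp
    have step1 : |f x| ≤ ∫ y in (0:ℝ)..1, |f x - f y| := by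
      conv_lhs => rw [hrepr]
      exact abs_integral_le_integral_abs h01
    have step2 : (∫ y in (0:ℝ)..1, |f x - f y|) ≤ ∫ y in (0:ℝ)..1, |G x - G y| := by
      apply integral_mono_on h01
      · apply ContinuousOn.intervalIntegrable
        rw [huIcc]; exact (continuousOn_const.sub hfc).abs
      · exact ((continuous_const.sub hGc).abs).intervalIntegrable 0 1
      · intro y hy; exact key1' y hy x hx
    have hsplit : (∫ y in (0:ℝ)..1, |G x - G y|) =
        (∫ y in (0:ℝ)..x, |G x - G y|) + ∫ y in x..1, |G x - G y| :=
      (integral_add_adjacent_intervals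
        (((continuous_const.sub hGc).abs).intervalIntegrable 0 x)
        (((continuous_const.sub hGc).abs).intervalIntegrable x 1)).symm
    have hleft : (∫ y in (0:ℝ)..x, |G x - G y|) = x * G x - H x := by
      have : (∫ y in (0:ℝ)..x, |G x - G y|) = ∫ y in (0:ℝ)..x, (G x - G y) := by
        apply integral_congr
        intro y hy
        rw [uIcc_of_le hx.1] at hy
        exact abs_of_nonneg (sub_nonneg.2 (hGmono hy.2))
      rw [this, integral_sub (intervalIntegrable_const) (hGc.intervalIntegrable 0 x),
        intervalIntegral.integral_const]
      simp [hHdef]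
    have hright : (∫ y in x..1, |G x - G y|) = (H 1 - H x) - (1 - x) * G x := by
      have : (∫ y in x..1, |G x - G y|) = ∫ y in x..1, (G y - G x) := by
        apply integral_congr
        intro y hy
        rw [uIcc_of_le hx.2] at hy
        show |G x - G y| = G y - G x
        rw [abs_sub_comm]
        exact abs_of_nonneg (sub_nonneg.2 (hGmono hy.1))
      rw [this, integral_sub (hGc.intervalIntegrable x 1) (intervalIntegrable_const),
        intervalIntegral.integral_const, ← hHsub]
      simp
    calc |f x| ≤ ∫ y in (0:ℝ)..1, |f x - f y| := step1
      _ ≤ ∫ y in (0:ℝ)..1, |G x - G y| := step2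
      _ = x * G x - H x + ((H 1 - H x) - (1 - x) * G x) := by rw [hsplit, hleft, hright]
      _ = (2*x - 1) * G x + (H 1 - 2 * H x) := by ring
  -- integrate the pointwise bound
  have hstep : ∫ x in (0:ℝ)..1, |f x| ≤
      ∫ x in (0:ℝ)..1, ((2*x - 1) * G x + (H 1 - 2 * H x)) := by
    apply integral_mono_on h01
    · apply ContinuousOn.intervalIntegrable
      rw [huIcc]; exact hfc.abs
    · exact (((continuous_const.mul continuous_id').sub continuous_const |>.mul hGc).add
        (continuous_const.sub (continuous_const.mul hHc))).intervalIntegrable 0 1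
    · exact key2
  -- integration by parts identities
  have hpoly : ∀ x : ℝ, HasDerivAt (fun x : ℝ => x^2 - x) (2*x - 1) x := by
    intro x
    have h := ((hasDerivAt_pow 2 x).sub (hasDerivAt_id x))
    exact h.congr_deriv (by simp)
  have hpoly2 : ∀ x : ℝ, HasDerivAt (fun x : ℝ => x^2/2) x x := by
    intro x
    have h := (hasDerivAt_pow 2 x).div_const 2
    exact h.congr_deriv (by simp)
  have I1 : ∫ x in (0:ℝ)..1, G x * (2*x - 1) = - ∫ x in (0:ℝ)..1, φ x * (x^2 - x) := by
    have := integral_mul_deriv_eq_deriv_mul (u := G) (u' := φ)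
      (v := fun x : ℝ => x^2 - x) (v' := fun x => 2*x - 1) (a := 0) (b := 1)
      (fun x _ => hGd x) (fun x _ => hpoly x)
      (hφc.intervalIntegrable 0 1)
      (((continuous_const.mul continuous_id').sub continuous_const).intervalIntegrable 0 1)
    rw [this, hG0]; norm_num
  have I2 : H 1 = G 1 - ∫ x in (0:ℝ)..1, φ x * x := by
    have := integral_mul_deriv_eq_deriv_mul (u := G) (u' := φ)
      (v := fun x : ℝ => x) (v' := fun _ => 1) (a := 0) (b := 1)
      (fun x _ => hGd x) (fun x _ => hasDerivAt_id x)
      (hφc.intervalIntegrable 0 1) (continuous_const.intervalIntegrable 0 1)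
    have h2 : (∫ x in (0:ℝ)..1, G x * 1) = H 1 := by
      simp [hHdef]
    rw [h2, hG0] at this
    rw [this]; ring
  have I3 : ∫ x in (0:ℝ)..1, H x = H 1 - ∫ x in (0:ℝ)..1, G x * x := by
    have := integral_mul_deriv_eq_deriv_mul (u := H) (u' := G)
      (v := fun x : ℝ => x) (v' := fun _ => 1) (a := 0) (b := 1)
      (fun x _ => hHd x) (fun x _ => hasDerivAt_id x)
      (hGc.intervalIntegrable 0 1) (continuous_const.intervalIntegrable 0 1)
    have h2 : (∫ x in (0:ℝ)..1, H x * 1) = ∫ x in (0:ℝ)..1, H x := by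
      simp
    rw [h2, hH0] at this
    rw [this]; ring
  have I4 : ∫ x in (0:ℝ)..1, G x * x = G 1 * (1/2) - ∫ x in (0:ℝ)..1, φ x * (x^2/2) := by
    have := integral_mul_deriv_eq_deriv_mul (u := G) (u' := φ)
      (v := fun x : ℝ => x^2/2) (v' := fun x => x) (a := 0) (b := 1)
      (fun x _ => hGd x) (fun x _ => hpoly2 x)
      (hφc.intervalIntegrable 0 1) (continuous_id'.intervalIntegrable 0 1)
    rw [this, hG0]; norm_num
  -- relation between the φ-integrals
  have hJ : ∫ x in (0:ℝ)..1, φ x * (x^2 - x) =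
      2 * (∫ x in (0:ℝ)..1, φ x * (x^2/2)) - ∫ x in (0:ℝ)..1, φ x * x := by
    rw [← intervalIntegral.integral_const_mul, ← integral_sub (f := fun x => 2 * (φ x * (x^2/2))) (g := fun x => φ x * x)
      ((hφc.mul ((continuous_pow 2).div_const 2)).intervalIntegrable 0 1 |>.const_mul 2)
      ((hφc.mul continuous_id').intervalIntegrable 0 1)]
    apply integral_congr
    intro x _
    ring
  -- compute the integral of the bound
  have hcomp : (∫ x in (0:ℝ)..1, ((2*x - 1) * G x + (H 1 - 2 * H x))) =
      - 2 * ∫ x in (0:ℝ)..1, φ x * (x^2 - x) := by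
    have hsplit : (∫ x in (0:ℝ)..1, ((2*x - 1) * G x + (H 1 - 2 * H x))) =
        (∫ x in (0:ℝ)..1, G x * (2*x - 1)) + (H 1 - 2 * ∫ x in (0:ℝ)..1, H x) := by
      rw [integral_add (f := fun x => (2*x - 1) * G x) (g := fun x => H 1 - 2 * H x)
          ((((continuous_const.mul continuous_id').sub continuous_const).mul hGc
            ).intervalIntegrable 0 1)
          ((continuous_const.sub (continuous_const.mul hHc)).intervalIntegrable 0 1),
        integral_sub (intervalIntegrable_const) ((hHc.intervalIntegrable 0 1).const_mul 2),
        intervalIntegral.integral_const, intervalIntegral.integral_const_mul]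
      have hcomm : (∫ x in (0:ℝ)..1, (2*x - 1) * G x) =
          ∫ x in (0:ℝ)..1, G x * (2*x - 1) := integral_congr fun x _ => mul_comm _ _
      rw [hcomm]
      norm_num
    rw [hsplit, I1, I3, I4, I2]
    linarith [hJ]
  -- final bound
  have hfinal : - 2 * (∫ x in (0:ℝ)..1, φ x * (x^2 - x)) ≤
      (1/2) * ∫ x in (0:ℝ)..1, φ x := by
    have : - 2 * (∫ x in (0:ℝ)..1, φ x * (x^2 - x)) =
        ∫ x in (0:ℝ)..1, φ x * (-2 * (x^2 - x)) := by
      rw [← intervalIntegral.integral_const_mul]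
      apply integral_congr
      intro x _
      ring
    rw [this, ← intervalIntegral.integral_const_mul]
    apply integral_mono_on h01
    · exact (hφc.mul (continuous_const.mul ((continuous_pow 2).sub continuous_id')
        )).intervalIntegrable 0 1
    · exact (continuous_const.mul hφc).intervalIntegrable 0 1
    · intro x hx
      have h1 := hφ0 x
      have h2 : 0 ≤ x := hx.1
      have h3 : x ≤ 1 := hx.2
      nlinarith [sq_nonneg (2*x - 1), mul_nonneg h1 (sq_nonneg (2*x - 1))]
  have hφint : (∫ x in (0:ℝ)..1, φ x) = ∫ x in (0:ℝ)..1, |f' x| := by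
    apply integral_congr
    intro x hx
    rw [huIcc] at hx
    exact hφeq x hx
  calc ∫ x in (0:ℝ)..1, |f x|
      ≤ ∫ x in (0:ℝ)..1, ((2*x - 1) * G x + (H 1 - 2 * H x)) := hstep
    _ = - 2 * ∫ x in (0:ℝ)..1, φ x * (x^2 - x) := hcomp
    _ ≤ (1/2) * ∫ x in (0:ℝ)..1, φ x := hfinal
    _ = (1 / 2) * ∫ x in (0:ℝ)..1, |f' x| := by rw [hφint]

/-- Unweighted case `ν ≡ 1`: the sharp mean-zero Poincaré constant
`max_x 2(∫₀ˣ 1)(∫ₓ¹ 1)/(∫₀¹ 1)` equals `1/2`, attained at `x = 1/2`, and every C¹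
function with mean zero satisfies `∫₀¹|f| ≤ (1/2)∫₀¹|f'|`. -/
theorem stmt_15 (f f' : ℝ → ℝ)
    (hf : ∀ x ∈ Icc (0:ℝ) 1, HasDerivAt f (f' x) x)
    (hf' : ContinuousOn f' (Icc 0 1))
    (hmean : ∫ x in (0:ℝ)..1, f x = 0) :
    IsGreatest ((fun x => (2 / (1:ℝ)) *
        ((∫ z in (0:ℝ)..x, (1:ℝ)) * (∫ z in x..1, (1:ℝ))) / (∫ z in (0:ℝ)..1, (1:ℝ))) ''
        Icc 0 1) (1 / 2) ∧
      (2 / (1:ℝ)) * ((∫ z in (0:ℝ)..(1/2:ℝ), (1:ℝ)) * (∫ z in (1/2:ℝ)..1, (1:ℝ))) /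
          (∫ z in (0:ℝ)..1, (1:ℝ)) = 1 / 2 ∧
      ∫ x in (0:ℝ)..1, |f x| ≤ (1 / 2) * ∫ x in (0:ℝ)..1, |f' x| := by
  have hone : ∀ a b : ℝ, (∫ z in a..b, (1:ℝ)) = b - a := fun a b => by
    simpa using intervalIntegral.integral_const (1:ℝ)
  refine ⟨⟨⟨1/2, by norm_num, ?_⟩, ?_⟩, ?_, poincare_aux f f' hf hf' hmean⟩
  · simp only [hone]
    norm_num
  · rintro y ⟨x, hx, rfl⟩
    simp only [hone]
    have h1 : (0:ℝ) ≤ x := hx.1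
    have h2 : x ≤ 1 := hx.2
    rw [div_le_iff₀ (by norm_num)]
    nlinarith [sq_nonneg (2*x - 1)]
  · simp only [hone]
    norm_num
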